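/- For the weighted geometric-mean fusion of finitely many strictly positive PMFs with weights ω_b ≥ 0 summing to 1, f(s) = Π_b f_b(s)^{ω_b} / Σ_t Π_b f_b(t)^{ω_b}, the Kullback–Leibler divergence satisfies: for any PMF g strictly positive on S, Σ_b ω_b · KL(g ‖ f_b) ≥ KL(g ‖ f), i.e., the fused PMF is at least as close (in average KL sense) to any reference PMF as the weighted average of the inputs. -/

import Mathlib

/-- The weighted geometric-mean (Chernoff) fusion of finitely many strictly
positive PMFs is at least as close in averaged Kullback–Leibler divergence to any
strictly positive reference PMF as the weighted average of the inputs: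
`∑_b ω_b · KL(g‖f_b) ≥ KL(g‖f)`. -/
theorem stmt_18 {S : Type*} [Fintype S] [Nonempty S] {m : ℕ}
    (fb : Fin m → S → ℝ) (hfbpos : ∀ b s, 0 < fb b s)
    (hfbsum : ∀ b, ∑ s, fb b s = 1)
    (ω : Fin m → ℝ) (hω0 : ∀ b, 0 ≤ ω b) (hω1 : ∑ b, ω b = 1)
    (g : S → ℝ) (hgpos : ∀ s, 0 < g s) (hgsum : ∑ s, g s = 1)
    (c : ℝ) (hc : c = ∑ t, ∏ b, fb b t ^ ω b)
    (f : S → ℝ) (hf : ∀ s, f s = (∏ b, fb b s ^ ω b) / c) :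
    ∑ s, g s * Real.log (g s / f s) ≤
      ∑ b, ω b * ∑ s, g s * Real.log (g s / fb b s) := by
  have hprodpos : ∀ s : S, 0 < ∏ b, fb b s ^ ω b := fun s =>
    Finset.prod_pos fun b _ => Real.rpow_pos_of_pos (hfbpos b s) _
  have hcpos : 0 < c := by
    rw [hc]
    exact Finset.sum_pos (fun t _ => hprodpos t) Finset.univ_nonempty
  have hc1 : c ≤ 1 := by
    rw [hc]
    calc ∑ t, ∏ b, fb b t ^ ω b ≤ ∑ t, ∑ b, ω b * fb b t := by
          refine Finset.sum_le_sum fun t _ => ?_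
          exact Real.geom_mean_le_arith_mean_weighted _ _ _ (fun b _ => hω0 b)
            hω1 (fun b _ => (hfbpos b t).le)
      _ = ∑ b, ω b * ∑ t, fb b t := by
          rw [Finset.sum_comm]
          exact Finset.sum_congr rfl fun b _ => (Finset.mul_sum _ _ _).symm
      _ = 1 := by simp [hfbsum, hω1]
  have hlog : ∀ s, Real.log (g s / f s)
      = Real.log (g s) - (∑ b, ω b * Real.log (fb b s)) + Real.log c := by
    intro s
    rw [hf, div_div_eq_mul_div, Real.log_div (mul_pos (hgpos s) hcpos).ne' (hprodpos s).ne',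
      Real.log_mul (hgpos s).ne' hcpos.ne',
      Real.log_prod (fun b _ => (Real.rpow_pos_of_pos (hfbpos b s) _).ne')]
    simp only [Real.log_rpow (hfbpos _ s)]
    ring
  have hL : ∑ s, g s * Real.log (g s / f s)
      = (∑ s, g s * Real.log (g s)) - (∑ b, ω b * ∑ s, g s * Real.log (fb b s))
        + Real.log c := by
    simp only [hlog, mul_sub, mul_add, Finset.sum_add_distrib, Finset.sum_sub_distrib]
    congr 1
    · congr 1
      simp only [Finset.mul_sum]
      rw [Finset.sum_comm]
      exact Finset.sum_congr rfl fun b _ => Finset.sum_congr rfl fun s _ => by ring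
    · rw [← Finset.sum_mul, hgsum, one_mul]
  have hR : ∑ b, ω b * ∑ s, g s * Real.log (g s / fb b s)
      = (∑ s, g s * Real.log (g s)) - (∑ b, ω b * ∑ s, g s * Real.log (fb b s)) := by
    have : ∀ b : Fin m, ∑ s, g s * Real.log (g s / fb b s)
        = (∑ s, g s * Real.log (g s)) - ∑ s, g s * Real.log (fb b s) := by
      intro b
      rw [← Finset.sum_sub_distrib]
      refine Finset.sum_congr rfl fun s _ => ?_
      rw [Real.log_div (hgpos s).ne' (hfbpos b s).ne']
      ring
    simp only [this, mul_sub, Finset.sum_sub_distrib, ← Finset.sum_mul, hω1, one_mul]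
  rw [hL, hR]
  have := Real.log_nonpos hcpos.le hc1
  linarith
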